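/- (Wall relation nonnegativity.) Let J, K ⊆ I be disjoint with |J| + |K| = n − 1 and let ℓ ∈ I − (J ∪ K). Suppose real numbers x_ℓ > 0, y_ℓ > 0, x_j (j ∈ J), and y_k (k ∈ K) satisfy the linear relation x_ℓ(−α^∨_ℓ) + Σ_{j∈J} x_j(−α^∨_j) + Σ_{k∈K} y_k e_k + y_ℓ e_ℓ = 0 in ℝ^n. Then x_j ≥ 0 for every j ∈ J. -/
import Mathlib


open Matrix

/-- The `j`-th simple coroot `α^∨_j := Σ_i C_{ij} e_i`, i.e. the `j`-th column of `C`. -/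
def acoroot {n : ℕ} (C : Matrix (Fin n) (Fin n) ℝ) (j : Fin n) : Fin n → ℝ :=
  fun i => C i j

/-- The cone `σ_{J,K}` of nonnegative linear combinations of the `-α^∨_j` (`j ∈ J`)
and the standard basis vectors `e_k` (`k ∈ K`). -/
def sigmaCone {n : ℕ} (C : Matrix (Fin n) (Fin n) ℝ) (J K : Finset (Fin n)) :
    Set (Fin n → ℝ) :=
  {v | ∃ x y : Fin n → ℝ, (∀ j ∈ J, 0 ≤ x j) ∧ (∀ k ∈ K, 0 ≤ y k) ∧
    v = (∑ j ∈ J, x j • (-acoroot C j)) + ∑ k ∈ K, y k • (Pi.single k 1 : Fin n → ℝ)}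

theorem stmt_9
    (n : ℕ) (hn : 1 ≤ n) (C : Matrix (Fin n) (Fin n) ℝ)
    (hdiag : ∀ i, C i i = 2)
    (hoff : ∀ i j, i ≠ j → C i j ≤ 0)
    (hprin : ∀ S : Finset (Fin n), S.Nonempty →
      IsUnit (C.submatrix (fun a : S => (a : Fin n)) (fun a : S => (a : Fin n))) ∧
      ∀ i j : S,
        0 ≤ (C.submatrix (fun a : S => (a : Fin n)) (fun a : S => (a : Fin n)))⁻¹ i j)
    (J K : Finset (Fin n)) (hJK : Disjoint J K)
    (hcard : J.card + K.card = n - 1)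
    (ℓ : Fin n) (hℓ : ℓ ∉ J ∪ K)
    (x y : Fin n → ℝ) (hxℓ : 0 < x ℓ) (hyℓ : 0 < y ℓ)
    (heq : x ℓ • (-acoroot C ℓ) + (∑ j ∈ J, x j • (-acoroot C j))
         + (∑ k ∈ K, y k • (Pi.single k 1 : Fin n → ℝ))
         + y ℓ • (Pi.single ℓ 1 : Fin n → ℝ) = 0) :
    ∀ j ∈ J, 0 ≤ x j := by
  classical
  intro j hj
  have hℓJ : ℓ ∉ J := fun h => hℓ (Finset.mem_union_left _ h)
  have hℓK : ℓ ∉ K := fun h => hℓ (Finset.mem_union_right _ h)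
  set S : Finset (Fin n) := insert ℓ J with hS
  have hSne : S.Nonempty := ⟨ℓ, Finset.mem_insert_self _ _⟩
  obtain ⟨hU, hInv⟩ := hprin S hSne
  set A : Matrix S S ℝ := C.submatrix (fun a : S => (a : Fin n)) (fun a : S => (a : Fin n)) with hA
  set B : Matrix S S ℝ := A⁻¹ with hB
  set xv : S → ℝ := fun m => x (m : Fin n) with hxv
  set b : S → ℝ := fun i => if (i : Fin n) = ℓ then y ℓ else 0 with hb
  have key : ∀ i : Fin n, i ∈ S →
      ∑ m ∈ S, C i m * x m = (if i = ℓ then y ℓ else 0) := by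
    intro i hi
    have hiK : i ∉ K := by
      rcases Finset.mem_insert.mp hi with h | h
      · exact h ▸ hℓK
      · exact fun hk => (Finset.disjoint_left.mp hJK h) hk
    have h0 := congrFun heq i
    simp only [Pi.add_apply, Pi.smul_apply, Pi.neg_apply, Finset.sum_apply,
      Pi.zero_apply, acoroot, smul_eq_mul, Pi.single_apply] at h0
    have hKsum : ∑ k ∈ K, y k * (if i = k then (1:ℝ) else 0) = 0 := by
      apply Finset.sum_eq_zero
      intro k hk
      have : i ≠ k := fun h => hiK (h ▸ hk)
      simp [this]
    rw [hKsum] at h0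
    rw [Finset.sum_insert hℓJ]
    have : C i ℓ * x ℓ + ∑ m ∈ J, C i m * x m
        = -(x ℓ * -C i ℓ + ∑ j ∈ J, x j * -C i j) := by
      rw [neg_add]
      push_cast
      rw [← Finset.sum_neg_distrib]
      congr 1
      · ring
      · exact Finset.sum_congr rfl (fun m _ => by ring)
    rw [this]
    -- from h0 : x ℓ * -C i ℓ + ∑ ... + 0 + y ℓ * ite = 0
    have : x ℓ * -C i ℓ + ∑ j ∈ J, x j * -C i j = -(y ℓ * (if i = ℓ then (1:ℝ) else 0)) := by
      linarith [h0]
    rw [this, neg_neg]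
    by_cases h : i = ℓ <;> simp [h]
  have hmv : A.mulVec xv = b := by
    funext i
    have := key (i : Fin n) i.2
    simp only [Matrix.mulVec, dotProduct, hA, Matrix.submatrix_apply]
    rw [Finset.sum_coe_sort S (fun m => C (i : Fin n) m * x m)]
    simpa [hb] using this
  have hdet : IsUnit A.det := (Matrix.isUnit_iff_isUnit_det A).mp hU
  have hBA : B * A = 1 := Matrix.nonsing_inv_mul A hdet
  have hx : xv = B.mulVec b := by
    calc xv = (1 : Matrix S S ℝ).mulVec xv := by rw [Matrix.one_mulVec]
    _ = (B * A).mulVec xv := by rw [hBA]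
    _ = B.mulVec (A.mulVec xv) := by rw [Matrix.mulVec_mulVec]
    _ = B.mulVec b := by rw [hmv]
  set j' : S := ⟨j, Finset.mem_insert_of_mem hj⟩ with hj'
  set ℓ' : S := ⟨ℓ, Finset.mem_insert_self _ _⟩ with hℓ'
  have hxj : x j = B j' ℓ' * y ℓ := by
    have := congrFun hx j'
    simp only [hxv] at this
    rw [show x j = xv j' from rfl, hx]
    simp only [Matrix.mulVec, dotProduct, hb]
    rw [Finset.sum_eq_single ℓ']
    · simp [hℓ']
    · intro i _ hi
      have : (i : Fin n) ≠ ℓ := fun h => hi (Subtype.ext h)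
      simp [this]
    · intro h; exact absurd (Finset.mem_univ _) h
  rw [hxj]
  exact mul_nonneg (hInv j' ℓ') hyℓ.le
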